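/- In the Lie superalgebra osp(1|2n) realized by (2n+1)×(2n+1) matrices with rows/columns indexed 0,…,2n, the elements b_k^+ = √2(e_{0,n+k} + e_{k,0}) and b_k^− = √2(e_{0,k} − e_{n+k,0}) satisfy the paraboson triple relations [{b_j^ξ, b_k^η}, b_l^ε] = (ε−ξ)δ_{jl} b_k^η + (ε−η)δ_{kl} b_j^ξ, where brackets of odd elements are anticommutators of matrices and the outer bracket is the matrix commutator. -/

import Mathlib

set_option maxHeartbeats 1000000


/-- Sign of a boolean: `true ↦ +1`, `false ↦ -1`. -/
def sgn (s : Bool) : ℤ := if s then 1 else -1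

/-- The odd elements `b_k^+ = √2(e_{0,n+k} + e_{k,0})` and `b_k^- = √2(e_{0,k} − e_{n+k,0})`
of `osp(1|2n)`, realized as `(2n+1)×(2n+1)` complex matrices (indices `0,…,2n`). -/
noncomputable def ospB (n : ℕ) (k : Fin n) : Bool → Matrix (Fin (2 * n + 1)) (Fin (2 * n + 1)) ℂ
  | true => (Real.sqrt 2 : ℂ) •
      (Matrix.single ⟨0, by omega⟩ ⟨n + 1 + k.val, by omega⟩ 1 +
       Matrix.single ⟨k.val + 1, by omega⟩ ⟨0, by omega⟩ 1)
  | false => (Real.sqrt 2 : ℂ) •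
      (Matrix.single ⟨0, by omega⟩ ⟨k.val + 1, by omega⟩ 1 -
       Matrix.single ⟨n + 1 + k.val, by omega⟩ ⟨0, by omega⟩ 1)


section aux
variable {n : ℕ}

lemma std_mul (a b c d : Fin (2*n+1)) (x y : ℂ) :
    Matrix.single a b x * Matrix.single c d y =
      if (b:ℕ) = (c:ℕ) then Matrix.single a d (x * y) else 0 := by
  split_ifs with h
  · have hbc : b = c := Fin.ext h
    subst hbc
    rw [Matrix.single_mul_single_same]
  · exact Matrix.single_mul_single_of_ne (c := x) a b c (fun hh => h (congrArg Fin.val hh)) y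

lemma aux1 (j k : Fin n) : (n + 1 + (j:ℕ) = (k:ℕ) + 1) ↔ False :=
  ⟨fun h => by omega, False.elim⟩
lemma aux2 (j k : Fin n) : ((j:ℕ) + 1 = n + 1 + (k:ℕ)) ↔ False :=
  ⟨fun h => by have := j.isLt; omega, False.elim⟩
lemma aux3 (j k : Fin n) : (n + 1 + (j:ℕ) = n + 1 + (k:ℕ)) ↔ j = k := by
  rw [Fin.ext_iff]; omega
lemma aux3' (j k : Fin n) : ((j:ℕ) + 1 = (k:ℕ) + 1) ↔ j = k := by
  rw [Fin.ext_iff]; omega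
lemma aux4 (j : Fin n) : ((j:ℕ) + 1 = 0) ↔ False :=
  ⟨fun h => by omega, False.elim⟩
lemma aux6 (j : Fin n) : (0 = (j:ℕ) + 1) ↔ False :=
  ⟨fun h => by omega, False.elim⟩
lemma aux5 (j : Fin n) : (n + 1 + (j:ℕ) = 0) ↔ False :=
  ⟨fun h => by omega, False.elim⟩
lemma aux7 (j : Fin n) : (0 = n + 1 + (j:ℕ)) ↔ False :=
  ⟨fun h => by omega, False.elim⟩
lemma sqrt2_sq : (Real.sqrt 2 : ℂ) * (Real.sqrt 2 : ℂ) = 2 := by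
  rw [← Complex.ofReal_mul, Real.mul_self_sqrt (by norm_num)]
  norm_num

end aux

/-- The matrices `b_k^±` satisfy the paraboson triple relations
`[{b_j^ξ, b_k^η}, b_l^ε] = (ε−ξ)δ_{jl} b_k^η + (ε−η)δ_{kl} b_j^ξ`. -/
theorem osp_matrices_triple_relations (n : ℕ) (ξ η ε : Bool) (j k l : Fin n) :
    (ospB n j ξ * ospB n k η + ospB n k η * ospB n j ξ) * ospB n l ε -
        ospB n l ε * (ospB n j ξ * ospB n k η + ospB n k η * ospB n j ξ) =
      ((sgn ε - sgn ξ : ℤ) : ℂ) • (if j = l then ospB n k η else 0) +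
        ((sgn ε - sgn η : ℤ) : ℂ) • (if k = l then ospB n j ξ else 0) := by
  cases ξ <;> cases η <;> cases ε <;>
  by_cases hjl : j = l <;> by_cases hkl : k = l <;> by_cases hjk : j = k <;>
  · simp only [ospB, sgn, hjl, hkl, hjk, Matrix.smul_mul, Matrix.mul_smul, smul_smul, add_mul,
      mul_add, sub_mul, mul_sub, std_mul, Fin.mk.injEq, aux1, aux2, aux3, aux3', aux4, aux6,
      aux5, aux7, sqrt2_sq, if_true, if_false, ite_true, ite_false, smul_zero, add_zero,
      zero_add, sub_zero, zero_sub, smul_add, smul_sub, Bool.false_eq_true, Bool.true_eq_false,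
      Matrix.zero_mul, Matrix.mul_zero, smul_neg, neg_zero, ite_mul, mul_ite,
      Int.cast_sub, Int.cast_one, Int.cast_neg, sub_self, zero_smul, sub_neg_eq_add,
      neg_neg, neg_add_rev, neg_sub, Fin.val_zero, Fin.isValue, one_mul, mul_one,
      neg_mul, mul_neg, smul_mul_assoc, mul_smul_comm, Int.cast_zero, Int.cast_ofNat,
      Fin.val_inj, if_pos rfl]
    try simp only [Ne.symm hjl, if_false, ite_false, smul_zero, neg_zero, add_zero,
      zero_add, sub_zero, zero_sub, zero_smul, neg_neg]
    try simp only [Ne.symm hkl, if_false, ite_false, smul_zero, neg_zero, add_zero,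
      zero_add, sub_zero, zero_sub, zero_smul, neg_neg]
    try simp only [Ne.symm hjk, if_false, ite_false, smul_zero, neg_zero, add_zero,
      zero_add, sub_zero, zero_sub, zero_smul, neg_neg]
    try norm_num [-Matrix.smul_single]
    try module
    try abel
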